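/- (Dennis–Moré characterization, as stated in Theorem 3.1 of the paper with unit step length.) Let f : ℝ^n → ℝ be twice continuously differentiable in a neighborhood of x*, where ∇f(x*) = 0 and the Hessian ∇²f(x*) is positive definite. Let (B_k) be a sequence of invertible n × n real matrices, and let (x_k) be generated by x_{k+1} = x_k + p_k with p_k = −B_k⁻¹ ∇f(x_k), p_k ≠ 0 for all k, and suppose x_k → x*. Then (x_k) converges to x* superlinearly, i.e. ‖x_{k+1} − x*‖ / ‖x_k − x*‖ → 0, if and only if lim_{k→∞} ‖(B_k − ∇²f(x*)) p_k‖ / ‖p_k‖ = 0. -/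

import Mathlib

open Filter Topology Asymptotics
open scoped InnerProductSpace

private lemma dm_aux_fwd (M a b r pk N : ℝ) (ha : 0 < a) (hM : 0 ≤ M)
    (hb : 0 ≤ b) (hr : 0 ≤ r) (hN0 : 0 ≤ N)
    (hN : N ≤ M * b + r) (hpk : a / 2 ≤ pk) :
    N / pk ≤ 2 * M * (b / a) + 2 * (r / a) := by
  have h1 : N / pk ≤ (M * b + r) / (a / 2) :=
    div_le_div₀ (by positivity) hN (half_pos ha) hpk
  have h2 : (M * b + r) / (a / 2) = 2 * M * (b / a) + 2 * (r / a) := by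
    field_simp
  linarith

private lemma dm_aux_bwd (C φ a b r pk HB N : ℝ) (ha : 0 < a) (hC : 0 < C)
    (hφ0 : 0 ≤ φ) (hb : 0 ≤ b) (hr : 0 ≤ r)
    (h1 : b ≤ C * HB) (h2 : HB ≤ N + r) (h3 : N = φ * pk) (h4 : pk ≤ b + a)
    (h5 : C * φ ≤ 1 / 2) :
    b / a ≤ 2 * C * φ + 2 * C * (r / a) := by
  have e1 : C * HB ≤ C * (N + r) := mul_le_mul_of_nonneg_left h2 hC.le
  have e2 : φ * pk ≤ φ * (b + a) := mul_le_mul_of_nonneg_left h4 hφ0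
  have e3 : C * (φ * pk) ≤ C * (φ * (b + a)) := mul_le_mul_of_nonneg_left e2 hC.le
  have e4 : (C * φ) * b ≤ (1 / 2) * b := mul_le_mul_of_nonneg_right h5 hb
  have key : b ≤ 2 * C * φ * a + 2 * C * r := by nlinarith
  rw [div_le_iff₀ ha]
  have h6 : (2 * C * φ + 2 * C * (r / a)) * a = 2 * C * φ * a + 2 * C * r := by
    field_simp
  linarith

/-- Dennis–Moré characterization (Theorem 3.1 with unit step length): the iteration
`x_{k+1} = x_k - B_k⁻¹ ∇f(x_k)` converging to a minimizer `x*` with positive definite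
Hessian converges superlinearly iff `‖(B_k - ∇²f(x*)) p_k‖ / ‖p_k‖ → 0`. -/
theorem dennis_more_characterization {n : ℕ} (f : EuclideanSpace ℝ (Fin n) → ℝ)
    (xs : EuclideanSpace ℝ (Fin n))
    (U : Set (EuclideanSpace ℝ (Fin n))) (hU : U ∈ 𝓝 xs)
    (hf : ContDiffOn ℝ 2 f U)
    (hgrad0 : gradient f xs = 0)
    (hHessPos : ∀ v : EuclideanSpace ℝ (Fin n), v ≠ 0 →
      0 < ⟪v, fderiv ℝ (gradient f) xs v⟫_ℝ)
    (B : ℕ → Matrix (Fin n) (Fin n) ℝ) (hBinv : ∀ k, IsUnit (B k))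
    (x p : ℕ → EuclideanSpace ℝ (Fin n))
    (hp : ∀ k, p k = -(Matrix.toEuclideanLin (B k)⁻¹ (gradient f (x k))))
    (hpne : ∀ k, p k ≠ 0)
    (hiter : ∀ k, x (k + 1) = x k + p k)
    (hconv : Tendsto x atTop (𝓝 xs)) :
    Tendsto (fun k => ‖x (k + 1) - xs‖ / ‖x k - xs‖) atTop (𝓝 0) ↔
      Tendsto (fun k =>
        ‖Matrix.toEuclideanLin (B k) (p k) - fderiv ℝ (gradient f) xs (p k)‖ / ‖p k‖)
        atTop (𝓝 0) := by
  classical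
  set H := fderiv ℝ (gradient f) xs with hH
  -- the gradient is differentiable at xs with derivative H
  have hf2 : ContDiffAt ℝ 2 f xs := hf.contDiffAt hU
  have hd1 : ContDiffAt ℝ 1 (fderiv ℝ f) xs := hf2.fderiv_right (by norm_num)
  have hdg : DifferentiableAt ℝ (gradient f) xs := by
    have heq : gradient f =
        fun y => (InnerProductSpace.toDual ℝ (EuclideanSpace ℝ (Fin n))).symm.toContinuousLinearEquiv
          (fderiv ℝ f y) := rfl
    rw [heq]
    exact ((InnerProductSpace.toDual ℝ (EuclideanSpace ℝ (Fin n))).symm.toContinuousLinearEquiv.differentiableAt).comp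
      xs (hd1.differentiableAt one_ne_zero)
  have hder : HasFDerivAt (gradient f) H xs := hdg.hasFDerivAt
  -- little-o along the sequence
  have hlo : (fun x' => gradient f x' - gradient f xs - H (x' - xs)) =o[𝓝 xs]
      fun x' => x' - xs := hder.isLittleO
  have hlo' : (fun k => gradient f (x k) - H (x k - xs)) =o[atTop]
      fun k => x k - xs := by
    have := hlo.comp_tendsto hconv
    simp only [Function.comp_def, hgrad0, sub_zero] at this
    exact this
  have hrto : Tendsto (fun k => ‖gradient f (x k) - H (x k - xs)‖ / ‖x k - xs‖)
      atTop (𝓝 0) := hlo'.norm_norm.tendsto_div_nhds_zero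
  -- antilipschitz constant for H
  have hinj : Function.Injective H := by
    intro a b hab
    by_contra hne
    have h1 := hHessPos (a - b) (sub_ne_zero.mpr hne)
    rw [map_sub, hab, sub_self, inner_zero_right] at h1
    exact lt_irrefl _ h1
  have hbij : Function.Bijective H :=
    ⟨hinj, (LinearMap.injective_iff_surjective
      (f := (H : (EuclideanSpace ℝ (Fin n)) →ₗ[ℝ] (EuclideanSpace ℝ (Fin n))))).mp hinj⟩
  obtain ⟨C, hC0, hKv⟩ : ∃ C : ℝ, 0 < C ∧
      ∀ v : EuclideanSpace ℝ (Fin n), ‖v‖ ≤ C * ‖H v‖ := by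
    let Heq : (EuclideanSpace ℝ (Fin n)) ≃L[ℝ] (EuclideanSpace ℝ (Fin n)) :=
      (LinearEquiv.ofBijective (H : (EuclideanSpace ℝ (Fin n)) →ₗ[ℝ] (EuclideanSpace ℝ (Fin n))) hbij).toContinuousLinearEquiv
    refine ⟨‖(Heq.symm : (EuclideanSpace ℝ (Fin n)) →L[ℝ] (EuclideanSpace ℝ (Fin n)))‖ + 1,
      by positivity, fun v => ?_⟩
    have h1 : Heq.symm (Heq v) = v := Heq.symm_apply_apply v
    have h2 : ‖Heq.symm (Heq v)‖ ≤
        ‖(Heq.symm : (EuclideanSpace ℝ (Fin n)) →L[ℝ] (EuclideanSpace ℝ (Fin n)))‖ * ‖Heq v‖ :=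
      (Heq.symm : (EuclideanSpace ℝ (Fin n)) →L[ℝ] (EuclideanSpace ℝ (Fin n))).le_opNorm (Heq v)
    have h3 : Heq v = H v := rfl
    rw [h1, h3] at h2
    nlinarith [norm_nonneg (H v), norm_nonneg v]
  -- operator norm bound for H
  obtain ⟨M, hM0, hMle⟩ : ∃ M : ℝ, 0 ≤ M ∧
      ∀ v : EuclideanSpace ℝ (Fin n), ‖H v‖ ≤ M * ‖v‖ :=
    ⟨‖H‖, norm_nonneg _, fun v => H.le_opNorm v⟩
  -- key identities
  have hBp : ∀ k, Matrix.toEuclideanLin (B k) (p k) = -(gradient f (x k)) := by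
    intro k
    have hdet := (Matrix.isUnit_iff_isUnit_det _).mp (hBinv k)
    rw [hp k, map_neg]
    congr 1
    simp [Matrix.toEuclideanLin_apply, Matrix.mulVec_mulVec,
      Matrix.mul_nonsing_inv _ hdet]
  have hxne : ∀ k, x k ≠ xs := by
    intro k hxk
    apply hpne k
    rw [hp k, hxk, hgrad0, map_zero, neg_zero]
  have hapos : ∀ k, (0:ℝ) < ‖x k - xs‖ := fun k =>
    norm_pos_iff.mpr (sub_ne_zero.mpr (hxne k))
  have hpe : ∀ k, p k = (x (k + 1) - xs) - (x k - xs) := by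
    intro k
    rw [hiter k]; abel
  have hNum : ∀ k, ‖Matrix.toEuclideanLin (B k) (p k) - H (p k)‖ =
      ‖H (x (k + 1) - xs) + (gradient f (x k) - H (x k - xs))‖ := by
    intro k
    have : Matrix.toEuclideanLin (B k) (p k) - H (p k) =
        -(H (x (k + 1) - xs) + (gradient f (x k) - H (x k - xs))) := by
      rw [hBp k, hpe k, map_sub]
      abel
    rw [this, norm_neg]
  constructor
  · -- superlinear ⇒ Dennis–Moré
    intro hS
    have hev : ∀ᶠ k in atTop, ‖x (k + 1) - xs‖ / ‖x k - xs‖ ≤ 1 / 2 :=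
      hS.eventually (eventually_le_nhds (by norm_num))
    apply squeeze_zero' (Eventually.of_forall fun k =>
        div_nonneg (norm_nonneg _) (norm_nonneg _))
      (g := fun k => 2 * M * (‖x (k + 1) - xs‖ / ‖x k - xs‖) +
        2 * (‖gradient f (x k) - H (x k - xs)‖ / ‖x k - xs‖))
    · filter_upwards [hev] with k hk
      have ha0 : 0 < ‖x k - xs‖ := hapos k
      have hb2 : ‖x (k + 1) - xs‖ ≤ ‖x k - xs‖ / 2 := by
        rw [div_le_iff₀ ha0] at hk
        linarith
      have hplb : ‖x k - xs‖ / 2 ≤ ‖p k‖ := by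
        have h2 : ‖x k - xs‖ - ‖x (k + 1) - xs‖ ≤ ‖(x (k + 1) - xs) - (x k - xs)‖ := by
          have h3 := norm_sub_norm_le (x k - xs) (x (k + 1) - xs)
          have h4 : ‖(x k - xs) - (x (k + 1) - xs)‖ =
              ‖(x (k + 1) - xs) - (x k - xs)‖ := norm_sub_rev _ _
          linarith [h4 ▸ h3]
        rw [← hpe k] at h2
        linarith
      have hnum : ‖Matrix.toEuclideanLin (B k) (p k) - H (p k)‖ ≤
          M * ‖x (k + 1) - xs‖ + ‖gradient f (x k) - H (x k - xs)‖ := by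
        rw [hNum k]
        exact (norm_add_le _ _).trans (add_le_add (hMle _) le_rfl)
      exact dm_aux_fwd M _ _ _ _ _ ha0 hM0 (norm_nonneg _) (norm_nonneg _)
        (norm_nonneg _) hnum hplb
    · have h1 := (hS.const_mul (2 * M)).add (hrto.const_mul 2)
      simpa using h1
  · -- Dennis–Moré ⇒ superlinear
    intro hD
    have hev : ∀ᶠ k in atTop,
        ‖Matrix.toEuclideanLin (B k) (p k) - H (p k)‖ / ‖p k‖ ≤ 1 / (2 * C) :=
      hD.eventually (eventually_le_nhds (one_div_pos.mpr (by linarith)))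
    apply squeeze_zero' (Eventually.of_forall fun k =>
        div_nonneg (norm_nonneg _) (norm_nonneg _))
      (g := fun k => 2 * C * (‖Matrix.toEuclideanLin (B k) (p k) - H (p k)‖ / ‖p k‖) +
        2 * C * (‖gradient f (x k) - H (x k - xs)‖ / ‖x k - xs‖))
    · filter_upwards [hev] with k hk
      have ha0 : 0 < ‖x k - xs‖ := hapos k
      have hp0 : (0:ℝ) < ‖p k‖ := norm_pos_iff.mpr (hpne k)
      have hφ0 : (0:ℝ) ≤ ‖Matrix.toEuclideanLin (B k) (p k) - H (p k)‖ / ‖p k‖ :=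
        div_nonneg (norm_nonneg _) (norm_nonneg _)
      have hnum_eq : ‖Matrix.toEuclideanLin (B k) (p k) - H (p k)‖ =
          (‖Matrix.toEuclideanLin (B k) (p k) - H (p k)‖ / ‖p k‖) * ‖p k‖ :=
        (div_mul_cancel₀ _ (ne_of_gt hp0)).symm
      have hHb : ‖H (x (k + 1) - xs)‖ ≤
          ‖Matrix.toEuclideanLin (B k) (p k) - H (p k)‖ +
            ‖gradient f (x k) - H (x k - xs)‖ := by
        rw [hNum k]
        have habs : ∀ u v : EuclideanSpace ℝ (Fin n), ‖u‖ ≤ ‖u + v‖ + ‖v‖ := by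
          intro u v
          have := norm_add_le (u + v) (-v)
          simpa using this
        exact habs _ _
      have hble : ‖x (k + 1) - xs‖ ≤ C * ‖H (x (k + 1) - xs)‖ := hKv _
      have hplen : ‖p k‖ ≤ ‖x (k + 1) - xs‖ + ‖x k - xs‖ := by
        rw [hpe k]
        exact norm_sub_le _ _
      have hCφ : C * (‖Matrix.toEuclideanLin (B k) (p k) - H (p k)‖ / ‖p k‖) ≤ 1 / 2 := by
        rw [le_div_iff₀ (by linarith : (0:ℝ) < 2 * C)] at hk
        nlinarith
      exact dm_aux_bwd C _ _ _ _ _ ‖H (x (k + 1) - xs)‖ _ ha0 hC0 hφ0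
        (norm_nonneg _) (norm_nonneg _) hble hHb hnum_eq hplen hCφ
    · have h1 := (hD.const_mul (2 * C)).add (hrto.const_mul (2 * C))
      simpa using h1
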